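/- Let r ∈ ℕ and let G be a graph whose binary cycle space is generated by cycles of length ≤ r. Then every tight separator of G is r-tomic. -/

import Mathlib

namespace LS

open SimpleGraph

variable {V : Type*}

/-- `(A, B)` is an (oriented) separation of `G`: the two sides cover `V`
and there is no edge between `A ∖ B` and `B ∖ A`. -/
def IsSep (G : SimpleGraph V) (A B : Set V) : Prop :=
  A ∪ B = Set.univ ∧ ∀ a ∈ A \ B, ∀ b ∈ B \ A, ¬G.Adj a b

/-- `(A,B) ≥ (C,D)` for oriented separations, i.e. `A ⊆ C` and `B ⊇ D`. -/
def SepGE (s t : Set V × Set V) : Prop := s.1 ⊆ t.1 ∧ t.2 ⊆ s.2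

/-- Two (unoriented) separations are nested if they have `≥`-comparable orientations. -/
def Nested (s t : Set V × Set V) : Prop :=
  SepGE s t ∨ SepGE s (t.2, t.1) ∨ SepGE (s.2, s.1) t ∨ SepGE (s.2, s.1) (t.2, t.1)

/-- Two separations cross if they are not nested. -/
def Crosses (s t : Set V × Set V) : Prop := ¬Nested s t

/-- The neighbourhood `N_G(K)` of a vertex set `K`. -/
def nbhdSet (G : SimpleGraph V) (K : Set V) : Set V :=
  {v | v ∉ K ∧ ∃ u ∈ K, G.Adj u v}

/-- `K` is (the vertex set of) a connected component of the subgraph of `G` induced on `S`. -/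
def IsCompOf (G : SimpleGraph V) (K S : Set V) : Prop :=
  K.Nonempty ∧ K ⊆ S ∧ (G.induce K).Connected ∧ ∀ a ∈ K, ∀ b ∈ S, G.Adj a b → b ∈ K

/-- `K` is a component of `G − X` that is tight at `X`, i.e. `N_G(K) = X`. -/
def TightCompAt (G : SimpleGraph V) (K X : Set V) : Prop :=
  IsCompOf G K Xᶜ ∧ nbhdSet G K = X

/-- A separation `{A,B}` is tight if `G − (A ∩ B)` has tight components
contained in `A` and in `B`, respectively. -/
def TightSep (G : SimpleGraph V) (A B : Set V) : Prop :=
  (∃ K, TightCompAt G K (A ∩ B) ∧ K ⊆ A) ∧ ∃ K, TightCompAt G K (A ∩ B) ∧ K ⊆ B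

/-- `X` is a tight separator: `G − X` has at least two components tight at `X`. -/
def TightSeparator (G : SimpleGraph V) (X : Set V) : Prop :=
  ∃ K₁ K₂, K₁ ≠ K₂ ∧ TightCompAt G K₁ X ∧ TightCompAt G K₂ X

/-- The set `E_G(S,T)` of edges of `G` with one end in `S` and the other in `T`. -/
def edgesBetween (G : SimpleGraph V) (S T : Set V) : Set (Sym2 V) :=
  {e | ∃ u v, G.Adj u v ∧ e = s(u, v) ∧ u ∈ S ∧ v ∈ T}

/-- `∂X`: the set of edges of `G` with exactly one end in `X`. -/
def edgeBdry (G : SimpleGraph V) (X : Set V) : Set (Sym2 V) :=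
  {e | ∃ u v, G.Adj u v ∧ e = s(u, v) ∧ u ∈ X ∧ v ∉ X}

/-- The separator of an oriented separation. -/
def tsSep (s : Set V × Set V) : Set V := s.1 ∩ s.2

/-- `p` lists the three distinct oriented separations of a ⊤-star. -/
def IsTStar (G : SimpleGraph V) (p : Fin 3 → Set V × Set V) : Prop :=
  Function.Injective p ∧ (∀ i, IsSep G (p i).1 (p i).2) ∧
  (∀ i j, i ≠ j → Disjoint ((p i).1 \ (p i).2) ((p j).1 \ (p j).2)) ∧
  (⋃ i, ((p i).1 \ (p i).2)) = (⋃ i, tsSep (p i))ᶜ ∧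
  ∀ i, ∀ v ∈ tsSep (p i), ∃ j, j ≠ i ∧ v ∈ tsSep (p j)

/-- The centre `Z` of a ⊤-star. -/
def tsCentre (p : Fin 3 → Set V × Set V) : Set V := ⋂ i, tsSep (p i)

/-- The `ij`-link `X_{ij}` of a ⊤-star. -/
def tsLink (p : Fin 3 → Set V × Set V) (i j : Fin 3) : Set V :=
  (tsSep (p i) ∩ tsSep (p j)) \ tsCentre p

/-- The ⊤-star `p` is relevant with base `p 0`. -/
def RelevantTStar (G : SimpleGraph V) (p : Fin 3 → Set V × Set V) : Prop :=
  IsTStar G p ∧ TightSep G (p 0).1 (p 0).2 ∧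
  ∀ x ∈ tsLink p 1 2, ∀ i : Fin 3, i ≠ 0 →
    (∃ y ∈ tsLink p 0 i, G.Adj x y) ∨
    ∃ y ∈ tsLink p 0 i ∪ tsCentre p, ∃ K, IsCompOf G K ((p i).1 \ (p i).2) ∧
      x ∈ nbhdSet G K ∧ y ∈ nbhdSet G K

/-- A bottleneck of order `k` in `G`, encoded as a set of oriented separations
closed under reversal (representing a set of unoriented separations). -/
def IsBottleneck (G : SimpleGraph V) (k : ℕ) (β : Set (Set V × Set V)) : Prop :=
  β.Nonempty ∧ (∀ s ∈ β, (s.2, s.1) ∈ β) ∧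
  (∀ s ∈ β, IsSep G s.1 s.2 ∧ TightSep G s.1 s.2 ∧ (s.1 ∩ s.2).encard = k) ∧
  ∀ p : Fin 3 → Set V × Set V, RelevantTStar G p →
    (∀ i, (tsSep (p i)).encard ≤ (k : ℕ∞)) → p 0 ∈ β → p 1 ∈ β ∨ p 2 ∈ β

/-! ### Tangles -/

/-- A tangle of order `ℓ` in `G`. -/
def IsTangle (G : SimpleGraph V) (ℓ : ℕ) (τ : Set (Set V × Set V)) : Prop :=
  (∀ s ∈ τ, IsSep G s.1 s.2 ∧ (s.1 ∩ s.2).encard < (ℓ : ℕ∞)) ∧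
  (∀ A B : Set V, IsSep G A B → (A ∩ B).encard < (ℓ : ℕ∞) → ((A, B) ∈ τ ∨ (B, A) ∈ τ)) ∧
  (∀ A B : Set V, (A, B) ∈ τ → (B, A) ∈ τ → A = B) ∧
  ∀ s₁ ∈ τ, ∀ s₂ ∈ τ, ∀ s₃ ∈ τ,
    ¬(s₁.1 ∪ s₂.1 ∪ s₃.1 = Set.univ ∧
      ∀ u v : V, G.Adj u v →
        (u ∈ s₁.1 ∧ v ∈ s₁.1) ∨ (u ∈ s₂.1 ∧ v ∈ s₂.1) ∨ (u ∈ s₃.1 ∧ v ∈ s₃.1))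

/-- The separation `{A,B}` distinguishes the tangles `τ` and `τ'`. -/
def DistinguishesT (τ τ' : Set (Set V × Set V)) (A B : Set V) : Prop :=
  ((A, B) ∈ τ ∧ (B, A) ∈ τ') ∨ ((B, A) ∈ τ ∧ (A, B) ∈ τ')

/-- The separation `{A,B}` distinguishes the vertex sets `Y` and `Z`. -/
def DistSets (Y Z A B : Set V) : Prop :=
  (Y ⊆ A ∧ (Y ∩ (A \ B)).Nonempty ∧ Z ⊆ B ∧ (Z ∩ (B \ A)).Nonempty) ∨
  (Y ⊆ B ∧ (Y ∩ (B \ A)).Nonempty ∧ Z ⊆ A ∧ (Z ∩ (A \ B)).Nonempty)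

/-! ### The construction of the nested sets `N^k(G)` -/

/-- `X^k`: the union of all `k`-bottlenecks in `G`. -/
def Xk (G : SimpleGraph V) (k : ℕ) : Set (Set V × Set V) :=
  {s | ∃ β, IsBottleneck G k β ∧ s ∈ β}

/-- `x^k(s)`: the number of separations in `X^k` that `s` crosses. -/
noncomputable def xk (G : SimpleGraph V) (k : ℕ) (s : Set V × Set V) : ℕ :=
  {t ∈ Xk G k | Crosses s t}.ncard

/-- `N^k(G,β)` relative to a previously constructed set `M` of separations:
the elements of `β` nested with `M` that minimise `x^k` among those. -/
def NkOfBeta (G : SimpleGraph V) (M : Set (Set V × Set V)) (k : ℕ)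
    (β : Set (Set V × Set V)) : Set (Set V × Set V) :=
  {s ∈ β | (∀ t ∈ M, Nested s t) ∧
    ∀ s' ∈ β, (∀ t ∈ M, Nested s' t) → xk G k s ≤ xk G k s'}

/-- `N^k(G)` relative to a previously constructed set `M`. -/
def NkStep (G : SimpleGraph V) (M : Set (Set V × Set V)) (k : ℕ) :
    Set (Set V × Set V) :=
  {s | ∃ β, IsBottleneck G k β ∧ s ∈ NkOfBeta G M k β}

/-- `N^{<k}(G) = ⋃_{j<k} N^j(G)`. -/
noncomputable def Nlt (G : SimpleGraph V) : ℕ → Set (Set V × Set V)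
  | 0 => ∅
  | k + 1 => Nlt G k ∪ NkStep G (Nlt G k) k

/-- `N^k(G)`. -/
noncomputable def Nk (G : SimpleGraph V) (k : ℕ) : Set (Set V × Set V) :=
  NkStep G (Nlt G k) k

/-- `N(G) = ⋃_k N^k(G)`. -/
noncomputable def NSet (G : SimpleGraph V) : Set (Set V × Set V) :=
  ⋃ k, Nk G k

/-! ### Walks, local components and local separations -/

/-- An `X`-walk: a walk having precisely its first and last vertex in `X`. -/
def IsXWalk (G : SimpleGraph V) (X : Set V) {u v : V} (W : G.Walk u v) : Prop :=
  u ∈ X ∧ v ∈ X ∧ ∀ w ∈ W.support, w ∈ X → w = u ∨ w = v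

/-- An `r`-local `X`-walk: an `X`-walk contained in a cycle of length `≤ r`,
or an `X`-walk consisting of a single `X`-edge. -/
def IsLocalXWalk (G : SimpleGraph V) (r : ℕ) (X : Set V) {u v : V} (W : G.Walk u v) :
    Prop :=
  IsXWalk G X W ∧
  ((∃ (a : V) (C : G.Walk a a), C.IsCycle ∧ C.length ≤ r ∧ ∀ e ∈ W.edges, e ∈ C.edges) ∨
    W.length = 1)

/-- An `r`-local `X`-path. -/
def IsLocalXPath (G : SimpleGraph V) (r : ℕ) (X : Set V) {u v : V} (W : G.Walk u v) :
    Prop :=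
  IsLocalXWalk G r X W ∧ W.IsPath

/-- Walks that are concatenations of `r`-local `X`-paths. -/
inductive ConcatLocalPaths (G : SimpleGraph V) (r : ℕ) (X : Set V) :
    ∀ {u v : V}, G.Walk u v → Prop
  | single {u v : V} (W : G.Walk u v) (h : IsLocalXPath G r X W) :
      ConcatLocalPaths G r X W
  | comp {u v w : V} (W₁ : G.Walk u v) (W₂ : G.Walk v w)
      (h₁ : IsLocalXPath G r X W₁) (h₂ : ConcatLocalPaths G r X W₂) :
      ConcatLocalPaths G r X (W₁.append W₂)

/-- `W ∈ W_r(X)`: `W` is a concatenation of `r`-local `X`-paths repeating no vertex of `X`. -/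
def MemWr (G : SimpleGraph V) (r : ℕ) (X : Set V) {u v : V} (W : G.Walk u v) : Prop :=
  ConcatLocalPaths G r X W ∧ ∀ x ∈ X, ¬W.support.Duplicate x

/-- `X` is `r`-tomic: any two of its vertices are joined by a walk in `W_r(X)`. -/
def Rtomic (G : SimpleGraph V) (r : ℕ) (X : Set V) : Prop :=
  ∀ x ∈ X, ∀ y ∈ X, x ≠ y → ∃ W : G.Walk x y, MemWr G r X W

/-- One step of the relation generating the `r`-local components at `X`:
`e = f`, or `e` and `f` are the first and last edges of an `r`-local `X`-walk
(both required to lie in `∂X`). -/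
def LocalEdgeStep (G : SimpleGraph V) (r : ℕ) (X : Set V) (e f : Sym2 V) : Prop :=
  e ∈ edgeBdry G X ∧ f ∈ edgeBdry G X ∧
  (e = f ∨ ∃ (u v : V) (W : G.Walk u v), IsLocalXWalk G r X W ∧
      W.edges.head? = some e ∧ W.edges.getLast? = some f)

/-- `F` is an `r`-local component at `X`: an equivalence class of the transitive
closure of `LocalEdgeStep` on `∂X`. -/
def LocalCompAt (G : SimpleGraph V) (r : ℕ) (X : Set V) (F : Set (Sym2 V)) : Prop :=
  ∃ e ∈ edgeBdry G X, F = {f | Relation.ReflTransGen (LocalEdgeStep G r X) e f}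

/-- An edge set `F` is tight with respect to `X` if every vertex of `X`
is incident with an edge of `F`. -/
def TightLocalComp (X : Set V) (F : Set (Sym2 V)) : Prop :=
  ∀ x ∈ X, ∃ e ∈ F, x ∈ e

/-- `X` is a tight `r`-local separator: at least two tight `r`-local components at `X`. -/
def TightLocalSeparator (G : SimpleGraph V) (r : ℕ) (X : Set V) : Prop :=
  ∃ F₁ F₂, F₁ ≠ F₂ ∧ LocalCompAt G r X F₁ ∧ LocalCompAt G r X F₂ ∧
    TightLocalComp X F₁ ∧ TightLocalComp X F₂

/-- `(E₁, X, E₂)` is an (oriented) `r`-local separation of `G`. -/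
def IsLocalSep (G : SimpleGraph V) (r : ℕ) (E₁ : Set (Sym2 V)) (X : Set V)
    (E₂ : Set (Sym2 V)) : Prop :=
  Disjoint E₁ E₂ ∧ E₁ ∪ E₂ = edgeBdry G X ∧
    ∀ F, LocalCompAt G r X F → F ⊆ E₁ ∨ F ⊆ E₂

/-- A tight `r`-local separation: each side includes a tight `r`-local component at `X`. -/
def TightLocalSep (G : SimpleGraph V) (r : ℕ) (E₁ : Set (Sym2 V)) (X : Set V)
    (E₂ : Set (Sym2 V)) : Prop :=
  IsLocalSep G r E₁ X E₂ ∧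
  (∃ F, LocalCompAt G r X F ∧ TightLocalComp X F ∧ F ⊆ E₁) ∧
  ∃ F, LocalCompAt G r X F ∧ TightLocalComp X F ∧ F ⊆ E₂

/-- The oriented `r`-local separation `s_r` induced by the oriented separation
`s = (A₁, A₂)`: its separator is `X = A₁ ∩ A₂`, and its sides are
`E_i = E_G(A_i ∖ X, X)`. -/
def inducedLocal (G : SimpleGraph V) (s : Set V × Set V) :
    Set (Sym2 V) × Set V × Set (Sym2 V) :=
  (edgesBetween G (s.1 \ (s.1 ∩ s.2)) (s.1 ∩ s.2), s.1 ∩ s.2,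
    edgesBetween G (s.2 \ (s.1 ∩ s.2)) (s.1 ∩ s.2))

/-- Some cycle of `G` of length `≤ r` alternates between the disjoint sets `X` and `Y`:
it visits four distinct vertices `x, y, x', y'` in this cyclic order with
`x, x' ∈ X` and `y, y' ∈ Y`. -/
def Alternates (G : SimpleGraph V) (r : ℕ) (X Y : Set V) : Prop :=
  ∃ (a : V) (C : G.Walk a a), C.IsCycle ∧ C.length ≤ r ∧
    ∃ (x y x' y' : V) (l₁ l₂ l₃ l₄ l₅ : List V),
      x ∈ X ∧ x' ∈ X ∧ y ∈ Y ∧ y' ∈ Y ∧ x ≠ x' ∧ y ≠ y' ∧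
      C.support = l₁ ++ x :: l₂ ++ y :: l₃ ++ x' :: l₄ ++ y' :: l₅

/-- `X` and `Y` are `r`-coupled. -/
def RCoupled (G : SimpleGraph V) (r : ℕ) (X Y : Set V) : Prop :=
  (X ∩ Y).Nonempty ∨ (Disjoint X Y ∧ Alternates G r X Y)

/-- The `X`-link for the side `Fi` of an `r`-local separation with separator `Y`:
vertices `x ∈ X ∖ Y` from which some walk in `W_r(X)` visits `Y` with its first
edge in `∂Y` lying in `Fi`. -/
def LocalLink (G : SimpleGraph V) (r : ℕ) (X Y : Set V) (Fi : Set (Sym2 V)) : Set V :=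
  {x | x ∈ X \ Y ∧ ∃ (z : V) (W : G.Walk x z), MemWr G r X W ∧
      (∃ y ∈ Y, y ∈ W.support) ∧
      ∃ (e : Sym2 V) (l₁ l₂ : List (Sym2 V)), W.edges = l₁ ++ e :: l₂ ∧
        e ∈ edgeBdry G Y ∧ e ∈ Fi ∧ ∀ e' ∈ l₁, e' ∉ edgeBdry G Y}

/-- The `r`-local separations `{E₁,X,E₂}` and `{F₁,Y,F₂}` cross. -/
def LocalCrosses (G : SimpleGraph V) (r : ℕ) (E₁ : Set (Sym2 V)) (X : Set V)
    (E₂ : Set (Sym2 V)) (F₁ : Set (Sym2 V)) (Y : Set V) (F₂ : Set (Sym2 V)) : Prop :=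
  RCoupled G r X Y ∧ ∀ i j : Bool,
    (LocalLink G r X Y (cond j F₁ F₂)).Nonempty ∨
    (LocalLink G r Y X (cond i E₁ E₂)).Nonempty ∨
    ((cond i E₁ E₂) ∩ (cond j F₁ F₂) ∩ edgeBdry G (X ∩ Y)).Nonempty

/-- The edge set of a walk, as a set. -/
def walkEdgeSet {G : SimpleGraph V} {a b : V} (W : G.Walk a b) : Set (Sym2 V) :=
  {e | e ∈ W.edges}

/-- The binary cycle space of `G` is generated by the cycles of length `≤ r`:
the edge set of every cycle is a symmetric difference of edge sets of cycles
of length `≤ r`. -/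
def CycleSpaceGenShort (G : SimpleGraph V) (r : ℕ) : Prop :=
  ∀ ⦃a : V⦄ (C : G.Walk a a), C.IsCycle →
    ∃ L : List ((b : V) × G.Walk b b),
      (∀ p ∈ L, p.2.IsCycle ∧ p.2.length ≤ r) ∧
      walkEdgeSet C = L.foldr (fun p E => symmDiff (walkEdgeSet p.2) E) ∅

/-! ### Local ⊤-stars and local bottlenecks -/

/-- `q` lists the three oriented `r`-local separations of an `r`-local ⊤-star. -/
def IsLocalTStar (G : SimpleGraph V) (r : ℕ)
    (q : Fin 3 → Set (Sym2 V) × Set V × Set (Sym2 V)) : Prop :=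
  Function.Injective q ∧
  (∀ i, IsLocalSep G r (q i).1 (q i).2.1 (q i).2.2) ∧
  (∀ i j, i ≠ j → Disjoint (q i).1 (q j).1) ∧
  (⋃ i, (q i).1) = edgeBdry G (⋃ i, (q i).2.1) ∧
  (∀ i, ∀ v ∈ (q i).2.1, ∃ j, j ≠ i ∧ v ∈ (q j).2.1) ∧
  ∀ F, LocalCompAt G r (⋃ i, (q i).2.1) F → ∃ i, F ⊆ (q i).1

/-- The `r`-local ⊤-star `q` is relevant with base `q 0`. -/
def RelevantLocalTStar (G : SimpleGraph V) (r : ℕ)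
    (q : Fin 3 → Set (Sym2 V) × Set V × Set (Sym2 V)) : Prop :=
  IsLocalTStar G r q ∧ TightLocalSep G r (q 0).1 (q 0).2.1 (q 0).2.2 ∧
  ∀ x ∈ ((q 1).2.1 ∩ (q 2).2.1) \ ⋂ j, (q j).2.1, ∀ i : Fin 3, i ≠ 0 →
    (∃ y ∈ ((q 0).2.1 ∩ (q i).2.1) \ ⋂ j, (q j).2.1, G.Adj x y) ∨
    ∃ F, LocalCompAt G r (⋃ j, (q j).2.1) F ∧ F ⊆ (q i).1 ∧
      (∃ e ∈ F, x ∈ e) ∧ ∃ e ∈ F, ∃ y ∈ (q 0).2.1 ∩ (q i).2.1, y ∈ e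

/-- An `r`-local bottleneck of order `k` in `G`, encoded as a set of oriented
`r`-local separations closed under reversal. -/
def IsLocalBottleneck (G : SimpleGraph V) (r k : ℕ)
    (β : Set (Set (Sym2 V) × Set V × Set (Sym2 V))) : Prop :=
  β.Nonempty ∧ (∀ q ∈ β, (q.2.2, q.2.1, q.1) ∈ β) ∧
  (∀ q ∈ β, TightLocalSep G r q.1 q.2.1 q.2.2 ∧ q.2.1.encard = (k : ℕ∞)) ∧
  ∀ p : Fin 3 → Set (Sym2 V) × Set V × Set (Sym2 V), RelevantLocalTStar G r p →
    (∀ i, ((p i).2.1).encard ≤ (k : ℕ∞)) → p 0 ∈ β → p 1 ∈ β ∨ p 2 ∈ β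

/-! ### Auxiliary machinery for Statement 10 -/

open Classical in
/-- Reversal of an `r`-local `X`-path. -/
theorem IsLocalXPath.rev {G : SimpleGraph V} {r : ℕ} {X : Set V} {u v : V}
    {W : G.Walk u v} (h : IsLocalXPath G r X W) : IsLocalXPath G r X W.reverse := by
  obtain ⟨⟨⟨hu, hv, hmem⟩, hloc⟩, hp⟩ := h
  refine ⟨⟨⟨hv, hu, ?_⟩, ?_⟩, hp.reverse⟩
  · intro w hw hwX
    rw [SimpleGraph.Walk.support_reverse, List.mem_reverse] at hw
    exact (hmem w hw hwX).symm
  · rcases hloc with ⟨a, C, hC, hCr, hsub⟩ | hlen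
    · refine Or.inl ⟨a, C, hC, hCr, ?_⟩
      intro e he
      rw [SimpleGraph.Walk.edges_reverse, List.mem_reverse] at he
      exact hsub e he
    · exact Or.inr (by simpa using hlen)

/-- The auxiliary graph `H` on `V` whose edges are the pairs of distinct vertices
joined by an `r`-local `X`-path. -/
def auxH (G : SimpleGraph V) (r : ℕ) (X : Set V) : SimpleGraph V where
  Adj u v := u ≠ v ∧ ∃ W : G.Walk u v, IsLocalXPath G r X W
  symm := by
    constructor
    rintro u v ⟨hne, W, hW⟩
    exact ⟨hne.symm, W.reverse, hW.rev⟩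
  loopless := ⟨fun v h => h.1 rfl⟩

theorem auxH_adj_mem {G : SimpleGraph V} {r : ℕ} {X : Set V} {u v : V}
    (h : (auxH G r X).Adj u v) : u ∈ X ∧ v ∈ X := by
  obtain ⟨-, W, ⟨⟨hu, hv, -⟩, -⟩, -⟩ := h
  exact ⟨hu, hv⟩

section Comp

variable {G : SimpleGraph V} {X K : Set V}

theorem IsCompOf.subset_compl (h : IsCompOf G K Xᶜ) : K ⊆ Xᶜ := h.2.1

/-- Components are closed along walks avoiding `X`. -/
theorem IsCompOf.mem_of_walk (h : IsCompOf G K Xᶜ) {a b : V} (W : G.Walk a b)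
    (hW : ∀ v ∈ W.support, v ∉ X) (ha : a ∈ K) : b ∈ K := by
  induction W with
  | nil => exact ha
  | cons hadj W ih =>
    rename_i u w t
    refine ih ?_ ?_
    · intro v hv; exact hW v (by simp [hv])
    · exact h.2.2.2 u ha w (hW w (by simp)) hadj

theorem IsCompOf.mem_iff_of_walk (h : IsCompOf G K Xᶜ) {a b : V} (W : G.Walk a b)
    (hW : ∀ v ∈ W.support, v ∉ X) : a ∈ K ↔ b ∈ K := by
  constructor
  · exact fun ha => h.mem_of_walk W hW ha
  · refine fun hb => h.mem_of_walk W.reverse ?_ hb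
    intro v hv
    rw [SimpleGraph.Walk.support_reverse, List.mem_reverse] at hv
    exact hW v hv

/-- Any two vertices of a component are joined by a walk within the component. -/
theorem IsCompOf.exists_walk {S : Set V} (h : IsCompOf G K S) {a b : V}
    (ha : a ∈ K) (hb : b ∈ K) : ∃ W : G.Walk a b, ∀ v ∈ W.support, v ∈ K := by
  obtain ⟨W0⟩ := h.2.2.1.preconnected ⟨a, ha⟩ ⟨b, hb⟩
  have key : ∀ v ∈ (W0.map (SimpleGraph.Embedding.induce K).toHom).support, v ∈ K := by
    intro v hv
    rw [SimpleGraph.Walk.support_map, List.mem_map] at hv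
    obtain ⟨⟨w, hw⟩, -, rfl⟩ := hv
    exact hw
  exact ⟨W0.map (SimpleGraph.Embedding.induce K).toHom, key⟩

theorem IsCompOf.eq_of_mem {K₁ K₂ : Set V} (h₁ : IsCompOf G K₁ Xᶜ)
    (h₂ : IsCompOf G K₂ Xᶜ) {v : V} (hv₁ : v ∈ K₁) (hv₂ : v ∈ K₂) : K₁ = K₂ := by
  have key : ∀ {L₁ L₂ : Set V}, IsCompOf G L₁ Xᶜ → IsCompOf G L₂ Xᶜ →
      v ∈ L₁ → v ∈ L₂ → L₁ ⊆ L₂ := by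
    intro L₁ L₂ g₁ g₂ w₁ w₂ a ha
    obtain ⟨W, hW⟩ := g₁.exists_walk w₁ ha
    exact g₂.mem_of_walk W (fun u hu => g₁.subset_compl (hW u hu)) w₂
  exact le_antisymm (key h₁ h₂ hv₁ hv₂) (key h₂ h₁ hv₂ hv₁)

theorem IsCompOf.disjoint {K₁ K₂ : Set V} (h₁ : IsCompOf G K₁ Xᶜ)
    (h₂ : IsCompOf G K₂ Xᶜ) (hne : K₁ ≠ K₂) : ∀ v, v ∈ K₁ → v ∉ K₂ :=
  fun v hv₁ hv₂ => hne (h₁.eq_of_mem h₂ hv₁ hv₂)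

end Comp

section Mark

open Classical in
/-- The edge marking: boundary edges of `X` whose `X`-end lies in the
`auxH`-component of `x` and whose other end lies in `K`. -/
noncomputable def mark (G : SimpleGraph V) (r : ℕ) (X : Set V) (x : V) (K : Set V)
    (e : Sym2 V) : ZMod 2 :=
  if ∃ u w, e = s(u, w) ∧ u ∈ X ∧ w ∉ X ∧ (auxH G r X).Reachable x u ∧ w ∈ K
  then 1 else 0

variable {G : SimpleGraph V} {r : ℕ} {X K : Set V} {x : V}

open Classical in
theorem mark_eq {u w : V} (hu : u ∈ X) (hw : w ∉ X) :
    mark G r X x K s(u, w) =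
      if (auxH G r X).Reachable x u ∧ w ∈ K then 1 else 0 := by
  unfold mark
  by_cases h : (auxH G r X).Reachable x u ∧ w ∈ K
  · rw [if_pos ⟨u, w, rfl, hu, hw, h.1, h.2⟩, if_pos h]
  · rw [if_neg ?_, if_neg h]
    rintro ⟨u', w', he, hu', hw', hr', hK'⟩
    rw [Sym2.eq_iff] at he
    rcases he with ⟨rfl, rfl⟩ | ⟨rfl, rfl⟩
    · exact h ⟨hr', hK'⟩
    · exact hw' hu

theorem mark_eq_zero_of_both {u w : V} (h : (u ∈ X ∧ w ∈ X) ∨ (u ∉ X ∧ w ∉ X)) :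
    mark G r X x K s(u, w) = 0 := by
  unfold mark
  rw [if_neg]
  rintro ⟨u', w', he, hu', hw', -, -⟩
  rw [Sym2.eq_iff] at he
  rcases he with ⟨rfl, rfl⟩ | ⟨rfl, rfl⟩ <;> rcases h with ⟨h1, h2⟩ | ⟨h1, h2⟩ <;>
    simp_all

end Mark
section WalkSum

variable {G : SimpleGraph V} {r : ℕ} {X K : Set V} {x : V}

theorem mid_sum (hK : IsCompOf G K Xᶜ) :
    ∀ (m : List V) {a u' : V} (T : G.Walk a u') (c : V),
    T.support = m ++ [u'] → (∀ v ∈ m, v ∉ X) → m.getLast? = some c → u' ∈ X →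
    (T.edges.map (mark G r X x K)).sum = mark G r X x K s(c, u') ∧ (a ∈ K ↔ c ∈ K) := by
  intro m
  induction m with
  | nil => intro a u' T c hsupp hm hc hu'; simp at hc
  | cons b m' ih =>
    intro a u' T c hsupp hm hc hu'
    cases T with
    | nil =>
      exfalso
      have h1 := congrArg List.length hsupp
      simp at h1
    | cons h T' =>
      rename_i w
      rw [SimpleGraph.Walk.support_cons] at hsupp
      obtain ⟨rfl, hsupp'⟩ : b = a ∧ T'.support = m' ++ [u'] := by
        refine ⟨?_, ?_⟩
        · have h2 := congrArg List.head? hsupp; simp at h2; exact h2.symm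
        · have h2 := congrArg List.tail hsupp; simpa using h2
      have hbX : b ∉ X := hm b (by simp)
      rcases m' with - | ⟨b', m''⟩
      · -- `T'` has support `[u']`, so it is nil
        simp only [List.nil_append] at hsupp'
        cases T' with
        | nil =>
          obtain rfl : b = c := by simpa using hc
          simp
        | cons h' T'' =>
          exfalso
          have h3 := SimpleGraph.Walk.support_eq_cons T''
          have h4 := congrArg List.length hsupp'
          rw [SimpleGraph.Walk.support_cons, h3] at h4
          simp at h4
      · obtain rfl : b' = w := by
          have h5 := (SimpleGraph.Walk.support_eq_cons T').symm.trans hsupp'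
          have h6 := congrArg List.head? h5
          exact (List.cons.inj h5).1.symm
        have hwX : b' ∉ X := hm b' (by simp)
        obtain ⟨hsum', hiff'⟩ := ih T' c hsupp'
          (fun v hv => hm v (by simp [List.mem_cons] at hv ⊢; tauto))
          (by rw [← hc, List.getLast?_cons_cons]) hu'
        have hmark0 : mark G r X x K s(b, b') = 0 :=
          mark_eq_zero_of_both (Or.inr ⟨hbX, hwX⟩)
        constructor
        · rw [SimpleGraph.Walk.edges_cons, List.map_cons, List.sum_cons, hmark0, hsum',
            zero_add]
        · refine Iff.trans ?_ hiff'
          refine hK.mem_iff_of_walk h.toWalk ?_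
          intro v hv
          simp [SimpleGraph.Adj.toWalk] at hv
          rcases hv with rfl | rfl
          · exact hbX
          · exact hwX

end WalkSum
section WalkSum2

variable {G : SimpleGraph V} {r : ℕ} {X K : Set V} {x : V}

theorem proper_sum [DecidableEq V] (hK : IsCompOf G K Xᶜ) {a0 : V} {D : G.Walk a0 a0}
    (hD : D.IsCycle) (hDr : D.length ≤ r) {u u' : V} (S : G.Walk u u') (m : List V)
    (hsupp : S.support = u :: (m ++ [u'])) (hm : ∀ v ∈ m, v ∉ X)
    (hu : u ∈ X) (hu' : u' ∈ X) (hsub : ∀ e ∈ S.edges, e ∈ D.edges) :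
    (S.edges.map (mark G r X x K)).sum = 0 := by
  have hreach : (auxH G r X).Reachable x u ↔ (auxH G r X).Reachable x u' := by
    by_cases hne : u = u'
    · rw [hne]
    · have hadj : (auxH G r X).Adj u u' := by
        refine ⟨hne, S.bypass, ⟨⟨hu, hu', ?_⟩, Or.inl ⟨a0, D, hD, hDr, ?_⟩⟩,
          S.bypass_isPath⟩
        · intro v hv hvX
          have hv' := S.support_bypass_subset hv
          rw [hsupp] at hv'
          have h9 : v = u ∨ v ∈ m ∨ v = u' := by simpa using hv'
          rcases h9 with rfl | h9 | rfl
          · exact Or.inl rfl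
          · exact absurd hvX (hm v h9)
          · exact Or.inr rfl
        · exact fun e he => hsub e (S.edges_bypass_subset he)
      exact ⟨fun h => h.trans hadj.reachable, fun h => h.trans hadj.symm.reachable⟩
  cases S with
  | nil =>
    exfalso
    have h1 := congrArg List.length hsupp
    simp at h1
  | cons h T =>
    rename_i w
    rw [SimpleGraph.Walk.support_cons] at hsupp
    have hsupp' : T.support = m ++ [u'] := by
      have h2 := congrArg List.tail hsupp; simpa using h2
    rcases m with - | ⟨b, m'⟩
    · -- single edge
      simp only [List.nil_append] at hsupp'
      cases T with
      | nil =>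
        rw [SimpleGraph.Walk.edges_cons, SimpleGraph.Walk.edges_nil, List.map_cons,
          List.map_nil, List.sum_cons, List.sum_nil, add_zero]
        exact mark_eq_zero_of_both (Or.inl ⟨hu, hu'⟩)
      | cons h' T'' =>
        exfalso
        have h3 := SimpleGraph.Walk.support_eq_cons T''
        have h4 := congrArg List.length hsupp'
        rw [SimpleGraph.Walk.support_cons, h3] at h4
        simp at h4
    · obtain rfl : b = w := by
        have h5 := (SimpleGraph.Walk.support_eq_cons T).symm.trans hsupp'
        have h6 := congrArg List.head? h5
        exact (List.cons.inj h5).1.symm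
      obtain ⟨c, hc⟩ : ∃ c, (b :: m').getLast? = some c := by
        cases h7 : (b :: m').getLast? with
        | none => exact absurd (List.getLast?_eq_none_iff.mp h7) (by simp)
        | some c => exact ⟨c, rfl⟩
      have hcmem : c ∈ b :: m' := List.mem_of_mem_getLast? hc
      have hcX : c ∉ X := hm c hcmem
      obtain ⟨hsum', hiff'⟩ := mid_sum (r := r) (x := x) hK (b :: m') T c hsupp' hm hc hu'
      rw [SimpleGraph.Walk.edges_cons, List.map_cons, List.sum_cons, hsum']
      have hwX : b ∉ X := hm b (by simp)
      rw [mark_eq hu hwX, Sym2.eq_swap, mark_eq hu' hcX]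
      have hcond : ((auxH G r X).Reachable x u ∧ b ∈ K) ↔
          ((auxH G r X).Reachable x u' ∧ c ∈ K) := by
        rw [hreach, hiff']
      by_cases hcase : (auxH G r X).Reachable x u ∧ b ∈ K
      · rw [if_pos hcase, if_pos (hcond.mp hcase)]
        exact CharTwo.add_self_eq_zero 1
      · rw [if_neg hcase, if_neg (fun h => hcase (hcond.mpr h)), add_zero]

theorem split_walk {w q : V} (W : G.Walk w q) : w ∉ X → q ∈ X →
    ∃ (u₁ : V) (P : G.Walk w u₁) (Q : G.Walk u₁ q) (m : List V),
      u₁ ∈ X ∧ W.edges = P.edges ++ Q.edges ∧ P.support = m ++ [u₁] ∧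
      (∀ v ∈ m, v ∉ X) ∧ Q.length < W.length := by
  induction W with
  | nil => intro hw hq; exact absurd hq hw
  | cons h W' ih =>
    rename_i p w₂ q'
    intro hw hq
    by_cases h2 : w₂ ∈ X
    · refine ⟨w₂, h.toWalk, W', [p], h2, ?_, ?_, ?_, ?_⟩
      · simp [SimpleGraph.Adj.toWalk]
      · simp [SimpleGraph.Adj.toWalk]
      · intro v hv; simp at hv; subst hv; exact hw
      · simp
    · obtain ⟨u₁, P', Q, m', hu₁, hed, hsup, hm', hlt⟩ := ih h2 hq
      refine ⟨u₁, SimpleGraph.Walk.cons h P', Q, p :: m', hu₁, ?_, ?_, ?_, ?_⟩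
      · simp [hed]
      · simp [hsup]
      · intro v hv
        rcases List.mem_cons.mp hv with rfl | hv'
        · exact hw
        · exact hm' v hv'
      · simp only [SimpleGraph.Walk.length_cons]
        omega

theorem walk_sum [DecidableEq V] (hK : IsCompOf G K Xᶜ) {a0 : V} {D : G.Walk a0 a0}
    (hD : D.IsCycle) (hDr : D.length ≤ r) :
    ∀ (n : ℕ) {p q : V} (W : G.Walk p q), W.length ≤ n → p ∈ X → q ∈ X →
    (∀ e ∈ W.edges, e ∈ D.edges) → (W.edges.map (mark G r X x K)).sum = 0 := by
  intro n
  induction n with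
  | zero =>
    intro p q W hlen hp hq hsub
    cases W with
    | nil => simp
    | cons h W' => simp at hlen
  | succ n ih =>
    intro p q W hlen hp hq hsub
    cases W with
    | nil => simp
    | cons h W₂ =>
      rename_i w
      rw [SimpleGraph.Walk.edges_cons, List.map_cons, List.sum_cons]
      by_cases hwX : w ∈ X
      · rw [mark_eq_zero_of_both (Or.inl ⟨hp, hwX⟩), zero_add]
        refine ih W₂ ?_ hwX hq (fun e he => hsub e (by simp [he]))
        have := SimpleGraph.Walk.length_cons h W₂
        omega
      · obtain ⟨u₁, P, Q, m, hu₁, hedges, hsuppP, hmP, hlt⟩ := split_walk W₂ hwX hq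
        have hseg := proper_sum (x := x) hK hD hDr (SimpleGraph.Walk.cons h P) m
          (by rw [SimpleGraph.Walk.support_cons, hsuppP]) hmP hp hu₁
          (by
            intro e he
            rw [SimpleGraph.Walk.edges_cons, List.mem_cons] at he
            rcases he with rfl | he'
            · exact hsub _ (by simp)
            · exact hsub e (by rw [SimpleGraph.Walk.edges_cons, hedges]; simp [he']))
        rw [SimpleGraph.Walk.edges_cons, List.map_cons, List.sum_cons] at hseg
        have hQ : (Q.edges.map (mark G r X x K)).sum = 0 := by
          refine ih Q ?_ hu₁ hq ?_
          · have := SimpleGraph.Walk.length_cons h W₂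
            omega
          · intro e he
            exact hsub e (by rw [SimpleGraph.Walk.edges_cons, hedges]; simp [he])
        rw [hedges, List.map_append, List.sum_append, hQ, add_zero]
        exact hseg
  
theorem cycle_sum [DecidableEq V] (hK : IsCompOf G K Xᶜ) {a0 : V} (D : G.Walk a0 a0)
    (hD : D.IsCycle) (hDr : D.length ≤ r) :
    (D.edges.map (mark G r X x K)).sum = 0 := by
  by_cases hX : ∃ v ∈ D.support, v ∈ X
  · obtain ⟨x₀, hs, hxX⟩ := hX
    have hperm : (D.rotate x₀ hs).edges.Perm D.edges := (D.rotate_edges x₀ hs).perm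
    have h0 := walk_sum (x := x) hK hD hDr (D.rotate x₀ hs).length (D.rotate x₀ hs) le_rfl
      hxX hxX (fun e he => hperm.mem_iff.mp he)
    exact ((hperm.map _).sum_eq).symm.trans h0
  · push_neg at hX
    apply List.sum_eq_zero
    intro z hz
    rw [List.mem_map] at hz
    obtain ⟨e, he, rfl⟩ := hz
    revert he
    induction e using Sym2.ind with
    | _ u w =>
      intro he
      exact mark_eq_zero_of_both (Or.inr ⟨hX u (D.fst_mem_support_of_mem_edges he),
        hX w (D.snd_mem_support_of_mem_edges he)⟩)

end WalkSum2
section Parity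

open Classical in
/-- The sum of `σ` over a (finite) set of edges, in `ZMod 2`. -/
noncomputable def esetSum (σ : Sym2 V → ZMod 2) (S : Set (Sym2 V)) : ZMod 2 :=
  if h : S.Finite then h.toFinset.sum σ else 0

theorem esetSum_of_finite (σ : Sym2 V → ZMod 2) {S : Set (Sym2 V)} (h : S.Finite) :
    esetSum σ S = h.toFinset.sum σ := by
  rw [esetSum, dif_pos h]

theorem walkEdgeSet_finite {G : SimpleGraph V} {a b : V} (W : G.Walk a b) :
    (walkEdgeSet W).Finite := by
  classical
  exact Set.Finite.ofFinset W.edges.toFinset (by intro e; simp [walkEdgeSet])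

theorem esetSum_walkEdgeSet [DecidableEq V] (σ : Sym2 V → ZMod 2) {G : SimpleGraph V}
    {a b : V} (W : G.Walk a b) (hnd : W.edges.Nodup) :
    esetSum σ (walkEdgeSet W) = (W.edges.map σ).sum := by
  rw [esetSum_of_finite σ (walkEdgeSet_finite W)]
  rw [← List.sum_toFinset σ hnd]
  apply Finset.sum_congr ?_ (fun _ _ => rfl)
  ext e
  simp [walkEdgeSet]

theorem Finset.sum_symmDiff_zmod2 [DecidableEq α] (A B : Finset α) (f : α → ZMod 2) :
    (symmDiff A B).sum f = A.sum f + B.sum f := by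
  have h1 : (symmDiff A B) ∪ (A ∩ B) = A ∪ B := by
    have := symmDiff_sup_inf (a := A) (b := B)
    simpa using this
  have h2 : Disjoint (symmDiff A B) (A ∩ B) := disjoint_symmDiff_inf A B
  have h3 : A.sum f + B.sum f = (A ∪ B).sum f + (A ∩ B).sum f :=
    (Finset.sum_union_inter).symm
  rw [← h1, Finset.sum_union h2] at h3
  rw [h3, add_assoc, CharTwo.add_self_eq_zero, add_zero]

theorem esetSum_symmDiff (σ : Sym2 V → ZMod 2) {A B : Set (Sym2 V)}
    (hA : A.Finite) (hB : B.Finite) :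
    esetSum σ (symmDiff A B) = esetSum σ A + esetSum σ B := by
  classical
  have hAB : (symmDiff A B).Finite := by
    apply Set.Finite.subset (hA.union hB)
    rw [Set.symmDiff_def]
    apply Set.union_subset
    · exact (Set.diff_subset).trans Set.subset_union_left
    · exact (Set.diff_subset).trans Set.subset_union_right
  rw [esetSum_of_finite σ hAB, esetSum_of_finite σ hA, esetSum_of_finite σ hB]
  rw [← Finset.sum_symmDiff_zmod2]
  apply Finset.sum_congr ?_ (fun _ _ => rfl)
  ext e
  simp only [Set.Finite.mem_toFinset, Finset.mem_symmDiff, Set.mem_symmDiff]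
  try tauto

theorem esetSum_foldr (σ : Sym2 V → ZMod 2) {G : SimpleGraph V}
    (L : List ((b : V) × G.Walk b b))
    (h : ∀ p ∈ L, (p.2.edges.Nodup ∧ ((p.2.edges.map σ)).sum = 0)) :
    (L.foldr (fun p E => symmDiff (walkEdgeSet p.2) E) ∅).Finite ∧
    esetSum σ (L.foldr (fun p E => symmDiff (walkEdgeSet p.2) E) ∅) = 0 := by
  classical
  induction L with
  | nil =>
    refine ⟨Set.finite_empty, ?_⟩
    rw [List.foldr_nil, esetSum_of_finite σ Set.finite_empty]
    simp
  | cons p L' ih =>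
    obtain ⟨hfin, hsum⟩ := ih (fun q hq => h q (by simp [hq]))
    rw [List.foldr_cons]
    refine ⟨?_, ?_⟩
    · apply Set.Finite.subset ((walkEdgeSet_finite p.2).union hfin)
      rw [Set.symmDiff_def]
      apply Set.union_subset
      · exact (Set.diff_subset).trans Set.subset_union_left
      · exact (Set.diff_subset).trans Set.subset_union_right
    · rw [esetSum_symmDiff σ (walkEdgeSet_finite p.2) hfin, hsum, add_zero,
        esetSum_walkEdgeSet σ p.2 (h p (by simp)).1]
      exact (h p (by simp)).2

end Parity
section BuildWalk

variable {G : SimpleGraph V} {r : ℕ} {X : Set V}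

theorem concat_of_auxH_walk [DecidableEq V] {y : V} :
    ∀ {u : V} (p : (auxH G r X).Walk u y), 0 < p.length → p.support.Nodup →
    ∃ W : G.Walk u y, ConcatLocalPaths G r X W ∧
      (∀ v ∈ X, W.support.count v ≤ 1) ∧
      (∀ v ∈ W.support, v ∈ X → v ∈ p.support) := by
  intro u p
  induction p with
  | nil => intro hlen _; simp at hlen
  | cons hadj p' ih =>
    rename_i a b c
    intro hlen hnodup
    obtain ⟨hne, S, hS⟩ := id hadj
    have hSnodup : S.support.Nodup := hS.2.support_nodup
    have hSX : ∀ v ∈ S.support, v ∈ X → v = a ∨ v = b := hS.1.1.2.2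
    cases p' with
    | nil =>
      refine ⟨S, ConcatLocalPaths.single S hS, ?_, ?_⟩
      · intro v hv
        exact List.nodup_iff_count_le_one.mp hSnodup v
      · intro v hv hvX
        rcases hSX v hv hvX with rfl | rfl <;> simp
    | cons hadj' p'' =>
      have hnodup' : ((SimpleGraph.Walk.cons hadj' p'').support).Nodup := by
        rw [SimpleGraph.Walk.support_cons] at hnodup
        exact hnodup.of_cons
      have hanotin : a ∉ (SimpleGraph.Walk.cons hadj' p'').support := by
        rw [SimpleGraph.Walk.support_cons] at hnodup
        exact (List.nodup_cons.mp hnodup).1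
      obtain ⟨W', hC', hcount', hmem'⟩ := ih (by simp) hnodup'
      refine ⟨S.append W', ConcatLocalPaths.comp S W' hS hC', ?_, ?_⟩
      · intro v hvX
        rw [SimpleGraph.Walk.support_append, List.count_append]
        have hW'supp := SimpleGraph.Walk.support_eq_cons W'
        by_cases hvS : v ∈ S.support
        · rcases hSX v hvS hvX with rfl | rfl
          · -- v = a : not in W'.support
            have hnotin : v ∉ W'.support.tail := by
              intro hmem
              exact hanotin (hmem' v (List.mem_of_mem_tail hmem) hvX)
            rw [List.count_eq_zero.mpr hnotin, add_zero]
            exact List.nodup_iff_count_le_one.mp hSnodup v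
          · -- v = b : head of W'.support
            have h1 : W'.support.count v ≤ 1 := hcount' v hvX
            rw [hW'supp, List.count_cons_self] at h1
            have h2 : W'.support.tail.count v = 0 := by omega
            rw [h2, add_zero]
            exact List.nodup_iff_count_le_one.mp hSnodup v
        · rw [List.count_eq_zero.mpr hvS, zero_add]
          calc W'.support.tail.count v ≤ W'.support.count v :=
                List.Sublist.count_le v (List.tail_sublist W'.support)
            _ ≤ 1 := hcount' v hvX
      · intro v hv hvX
        rw [SimpleGraph.Walk.mem_support_append_iff] at hv
        rcases hv with hv | hv
        · rcases hSX v hv hvX with rfl | rfl <;> simp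
        · have := hmem' v hv hvX
          rw [SimpleGraph.Walk.support_cons]
          exact List.mem_cons_of_mem _ this

theorem reachable_to_wr [DecidableEq V] {x y : V} (hxy : x ≠ y)
    (h : (auxH G r X).Reachable x y) : ∃ W : G.Walk x y, MemWr G r X W := by
  obtain ⟨p0⟩ := h
  set P := p0.toPath with hP
  have hlen : 0 < P.1.length := by
    cases hq : P.1 with
    | nil => exact absurd rfl hxy
    | cons h' q => simp [hq]
  obtain ⟨W, hC, hcount, -⟩ := concat_of_auxH_walk P.1 hlen P.2.support_nodup
  refine ⟨W, hC, ?_⟩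
  intro v hvX hdup
  have h2 := List.duplicate_iff_two_le_count.mp hdup
  have h3 := hcount v hvX
  omega

end BuildWalk
section Main

theorem xpath_struct [DecidableEq V] {G : SimpleGraph V} {X K : Set V} {x y : V}
    (hT : TightCompAt G K X) (hx : x ∈ X) (hy : y ∈ X) (hxy : x ≠ y) :
    ∃ (P : G.Walk x y) (a b : V), a ∈ K ∧ b ∈ K ∧ P.IsPath ∧
      (∃ m : List V, P.support = x :: (m ++ [y]) ∧ ∀ v ∈ m, v ∈ K) ∧
      (∃ l : List (Sym2 V), P.edges = s(x, a) :: (l ++ [s(b, y)]) ∧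
        ∀ e ∈ l, ∀ v ∈ e, v ∈ K) := by
  obtain ⟨hcomp, hnb⟩ := hT
  have hx' : x ∈ nbhdSet G K := by rw [hnb]; exact hx
  have hy' : y ∈ nbhdSet G K := by rw [hnb]; exact hy
  obtain ⟨hxK, a, haK, hax⟩ := hx'
  obtain ⟨hyK, b, hbK, hby⟩ := hy'
  obtain ⟨R0, hR0⟩ := hcomp.exists_walk haK hbK
  set R := R0.bypass with hR
  have hRpath : R.IsPath := R0.bypass_isPath
  have hRK : ∀ v ∈ R.support, v ∈ K := fun v hv => hR0 v (R0.support_bypass_subset hv)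
  have hKX : ∀ v, v ∈ K → v ∉ X := fun v hv => hcomp.subset_compl hv
  refine ⟨SimpleGraph.Walk.cons hax.symm (R.concat hby), a, b, haK, hbK, ?_, ?_, ?_⟩
  · apply SimpleGraph.Walk.IsPath.mk'
    rw [SimpleGraph.Walk.support_cons, SimpleGraph.Walk.support_concat,
      List.nodup_cons]
    refine ⟨?_, ?_⟩
    · intro hmem
      rcases List.mem_append.mp hmem with h1 | h1
      · exact hKX x (hRK x h1) hx
      · rw [List.mem_singleton] at h1; exact hxy h1
    · rw [List.nodup_append]
      refine ⟨hRpath.support_nodup, List.nodup_singleton y, ?_⟩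
      intro v hv w hv' hvw
      rw [List.mem_singleton] at hv'
      rw [hvw, hv'] at hv
      exact hKX y (hRK y hv) hy
  · refine ⟨R.support, ?_, hRK⟩
    rw [SimpleGraph.Walk.support_cons, SimpleGraph.Walk.support_concat]
  · refine ⟨R.edges, ?_, ?_⟩
    · rw [SimpleGraph.Walk.edges_cons, SimpleGraph.Walk.edges_concat,
        List.concat_eq_append]
    · intro e he v hv
      revert hv
      induction e using Sym2.ind with
      | _ p q =>
        intro hv
        rw [Sym2.mem_iff] at hv
        rcases hv with rfl | rfl
        · exact hRK v (R.fst_mem_support_of_mem_edges he)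
        · exact hRK v (R.snd_mem_support_of_mem_edges he)

end Main
/-- If the binary cycle space of `G` is generated by cycles
of length `≤ r`, then every tight separator of `G` is `r`-tomic. -/
theorem statement10 {V : Type*} (G : SimpleGraph V) (r : ℕ)
    (hgen : CycleSpaceGenShort G r) (X : Set V) (hX : TightSeparator G X) :
    Rtomic G r X := by
  classical
  obtain ⟨K₁, K₂, hKne, hT₁, hT₂⟩ := hX
  intro x hx y hy hxy
  have hcomp₁ := hT₁.1
  have hcomp₂ := hT₂.1
  have hdisj : ∀ v, v ∈ K₁ → v ∉ K₂ := fun v h1 h2 => hcomp₁.disjoint hcomp₂ hKne v h1 h2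
  have hdisj' : ∀ v, v ∈ K₂ → v ∉ K₁ :=
    fun v h1 h2 => hcomp₂.disjoint hcomp₁ (Ne.symm hKne) v h1 h2
  have hK₁X : ∀ v, v ∈ K₁ → v ∉ X := fun v hv => hcomp₁.subset_compl hv
  have hK₂X : ∀ v, v ∈ K₂ → v ∉ X := fun v hv => hcomp₂.subset_compl hv
  suffices hreach : (auxH G r X).Reachable x y by exact reachable_to_wr hxy hreach
  by_contra hnr
  obtain ⟨P₁, a₁, b₁, ha₁, hb₁, hP₁path, ⟨m₁, hm₁supp, hm₁K⟩, ⟨l₁, hl₁, hl₁K⟩⟩ :=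
    xpath_struct hT₁ hx hy hxy
  obtain ⟨P₂, a₂, b₂, ha₂, hb₂, hP₂path, ⟨m₂, hm₂supp, hm₂K⟩, ⟨l₂, hl₂, hl₂K⟩⟩ :=
    xpath_struct hT₂ hx hy hxy
  set σ := mark G r X x K₁ with hσ
  -- edges of `P₁` meet `K₁`; edges of `P₂` have all their ends in `{x, y} ∪ K₂`
  have hP₁K : ∀ e ∈ P₁.edges, ∃ v, v ∈ K₁ ∧ v ∈ e := by
    intro e he
    rw [hl₁] at he
    rcases List.mem_cons.mp he with rfl | he'
    · exact ⟨a₁, ha₁, by simp⟩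
    rcases List.mem_append.mp he' with he'' | he''
    · revert he''
      induction e using Sym2.ind with
      | _ p q => intro he''; exact ⟨p, hl₁K _ he'' p (by simp), by simp⟩
    · rw [List.mem_singleton] at he''
      subst he''
      exact ⟨b₁, hb₁, by simp⟩
  have hP₂supp : ∀ v ∈ P₂.support, v = x ∨ v = y ∨ v ∈ K₂ := by
    intro v hv
    rw [hm₂supp] at hv
    rcases List.mem_cons.mp hv with rfl | hv'
    · exact Or.inl rfl
    rcases List.mem_append.mp hv' with h | h
    · exact Or.inr (Or.inr (hm₂K v h))
    · rw [List.mem_singleton] at h; exact Or.inr (Or.inl h)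
  have hedis : ∀ e ∈ P₁.edges, e ∉ P₂.edges := by
    intro e he₁ he₂
    obtain ⟨v, hvK, hve⟩ := hP₁K e he₁
    have hvsupp : v ∈ P₂.support := by
      revert hve
      induction e using Sym2.ind with
      | _ p q =>
        intro hve
        rw [Sym2.mem_iff] at hve
        rcases hve with rfl | rfl
        · exact P₂.fst_mem_support_of_mem_edges he₂
        · exact P₂.snd_mem_support_of_mem_edges he₂
    rcases hP₂supp v hvsupp with rfl | h | h
    · exact hK₁X v hvK hx
    · subst h; exact hK₁X v hvK hy
    · exact hdisj v hvK h
  -- the cycle O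
  set O := P₁.append P₂.reverse with hOdef
  have hOedges : O.edges = P₁.edges ++ P₂.edges.reverse := by
    rw [hOdef, SimpleGraph.Walk.edges_append, SimpleGraph.Walk.edges_reverse]
  have hOtrail : O.IsTrail := by
    constructor
    rw [hOedges, List.nodup_append]
    refine ⟨hP₁path.isTrail.edges_nodup, List.nodup_reverse.mpr
      hP₂path.isTrail.edges_nodup, ?_⟩
    intro e he₁ e' he₂ hee
    subst hee
    exact hedis e he₁ (List.mem_reverse.mp he₂)
  have hOne : O ≠ SimpleGraph.Walk.nil := by
    intro h
    have h2 : O.edges = [] := by rw [h]; rfl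
    rw [hOedges, hl₁] at h2
    simp at h2
  have hOtail : O.support.tail.Nodup := by
    have htail : O.support.tail = (m₁ ++ [y]) ++ (m₂.reverse ++ [x]) := by
      rw [hOdef, SimpleGraph.Walk.tail_support_append, SimpleGraph.Walk.support_reverse,
        hm₁supp, hm₂supp]
      simp
    rw [htail]
    have h1 : (x :: (m₁ ++ [y])).Nodup := hm₁supp ▸ hP₁path.support_nodup
    have h2 : (x :: (m₂ ++ [y])).Nodup := hm₂supp ▸ hP₂path.support_nodup
    rw [List.nodup_cons] at h1 h2
    rw [List.nodup_append]
    refine ⟨h1.2, ?_, ?_⟩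
    · rw [List.nodup_append]
      refine ⟨List.nodup_reverse.mpr (List.Nodup.of_append_left h2.2), List.nodup_singleton x, ?_⟩
      intro v hv w hv' hvw
      rw [List.mem_singleton] at hv'
      rw [hvw, hv'] at hv
      exact hK₂X x (hm₂K x (List.mem_reverse.mp hv)) hx
    · intro v hv w hv' hvw
      subst hvw
      have hv1 : v ∈ m₁ ∨ v = y := by
        rcases List.mem_append.mp hv with h | h
        · exact Or.inl h
        · rw [List.mem_singleton] at h; exact Or.inr h
      have hv2 : v ∈ m₂ ∨ v = x := by
        rcases List.mem_append.mp hv' with h | h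
        · exact Or.inl (List.mem_reverse.mp h)
        · rw [List.mem_singleton] at h; exact Or.inr h
      rcases hv1 with h1m | hv1y
      · rcases hv2 with h2m | hv2x
        · exact hdisj v (hm₁K v h1m) (hm₂K v h2m)
        · exact hK₁X v (hm₁K v h1m) (hv2x ▸ hx)
      · rcases hv2 with h2m | hv2x
        · exact hK₂X v (hm₂K v h2m) (hv1y ▸ hy)
        · exact hxy (hv2x.symm.trans hv1y)
  have hOcyc : O.IsCycle := (SimpleGraph.Walk.isCycle_def O).mpr ⟨hOtrail, hOne, hOtail⟩
  -- sums along P₁ and P₂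
  have hmid₁ : ∀ l : List (Sym2 V), (∀ e ∈ l, ∀ v ∈ e, v ∈ K₁) →
      (l.map σ).sum = 0 := by
    intro l hl
    apply List.sum_eq_zero
    intro z hz
    rw [List.mem_map] at hz
    obtain ⟨e, he, rfl⟩ := hz
    revert he
    induction e using Sym2.ind with
    | _ p q =>
      intro he
      exact mark_eq_zero_of_both (Or.inr ⟨hK₁X p (hl _ he p (by simp)),
        hK₁X q (hl _ he q (by simp))⟩)
  have hmid₂ : ∀ l : List (Sym2 V), (∀ e ∈ l, ∀ v ∈ e, v ∈ K₂) →
      (l.map σ).sum = 0 := by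
    intro l hl
    apply List.sum_eq_zero
    intro z hz
    rw [List.mem_map] at hz
    obtain ⟨e, he, rfl⟩ := hz
    revert he
    induction e using Sym2.ind with
    | _ p q =>
      intro he
      exact mark_eq_zero_of_both (Or.inr ⟨hK₂X p (hl _ he p (by simp)),
        hK₂X q (hl _ he q (by simp))⟩)
  have hlast : ∀ b : V, b ∉ X → σ s(b, y) = 0 := by
    intro b hbX
    rw [hσ, Sym2.eq_swap, mark_eq hy hbX, if_neg]
    rintro ⟨hr, -⟩
    exact hnr hr
  have hsum₁ : (P₁.edges.map σ).sum = 1 := by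
    rw [hl₁, List.map_cons, List.sum_cons, List.map_append, List.sum_append,
      hmid₁ l₁ hl₁K, List.map_singleton, List.sum_singleton,
      hlast b₁ (hK₁X b₁ hb₁), add_zero, add_zero, hσ, mark_eq hx (hK₁X a₁ ha₁),
      if_pos ⟨SimpleGraph.Reachable.refl x, ha₁⟩]
  have hsum₂ : (P₂.edges.map σ).sum = 0 := by
    rw [hl₂, List.map_cons, List.sum_cons, List.map_append, List.sum_append,
      hmid₂ l₂ hl₂K, List.map_singleton, List.sum_singleton,
      hlast b₂ (hK₂X b₂ hb₂), add_zero, add_zero, hσ, mark_eq hx (hK₂X a₂ ha₂),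
      if_neg]
    rintro ⟨-, hK⟩
    exact hdisj' a₂ ha₂ hK
  have hOsum : (O.edges.map σ).sum = 1 := by
    rw [hOedges, List.map_append, List.sum_append, hsum₁]
    rw [List.map_reverse, List.sum_reverse, hsum₂, add_zero]
  -- the contradiction
  obtain ⟨L, hL, hLset⟩ := hgen O hOcyc
  have hLzero := esetSum_foldr σ L (fun p hp =>
    ⟨(hL p hp).1.isCircuit.isTrail.edges_nodup,
      cycle_sum hcomp₁ p.2 (hL p hp).1 (hL p hp).2⟩)
  have hzero : esetSum σ (walkEdgeSet O) = 0 := by rw [hLset]; exact hLzero.2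
  rw [esetSum_walkEdgeSet σ O hOtrail.edges_nodup, hOsum] at hzero
  exact one_ne_zero hzero

end LS
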